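/- Let (X,τ) be a topological space. Then X is a continuous open image of some topological space possessing a Lusin π-base if and only if X has an α-scheme and the cardinality of X is at most the cardinality of the continuum 𝔠. -/

import Mathlib

open Set Topology

universe u v

/-- The restriction `p↾n` of `p : ℕ → ℕ`, as a finite sequence in `ω^{<ω}`. -/
def pre (p : ℕ → ℕ) (n : ℕ) : List ℕ := List.ofFn fun i : Fin n => p i

/-- `a ⊑ p` : the finite sequence `a` is an initial segment of the branch `p`. -/
def IsPre (a : List ℕ) (p : ℕ → ℕ) : Prop := a = pre p a.length

/-- `S_a = {p ∈ ω^ω : a ⊑ p}`, the pieces of the standard Lusin scheme. -/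
def stdS (a : List ℕ) : Set (ℕ → ℕ) := {p | IsPre a p}

section scheme

variable {X Y : Type*}

/-- `fruit_p(V) = ⋂_n V_{p↾n}`. -/
def fruit (V : List ℕ → Set X) (p : ℕ → ℕ) : Set X := ⋂ n, V (pre p n)

/-- `flesh(V) = ⋃_a V_a`. -/
def flesh (V : List ℕ → Set X) : Set X := ⋃ a, V a

/-- The Souslin scheme `V` covers the set `A`. -/
def Covers (V : List ℕ → Set X) (A : Set X) : Prop :=
  V [] = A ∧ ∀ a, V a = ⋃ n, V (a ++ [n])

/-- The Souslin scheme `V` partitions the set `A`. -/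
def Partitions (V : List ℕ → Set X) (A : Set X) : Prop :=
  Covers V A ∧ ∀ a, ∀ n m : ℕ, n ≠ m → V (a ++ [n]) ∩ V (a ++ [m]) = ∅

/-- `V` is complete: every fruit is nonempty. -/
def CompleteScheme (V : List ℕ → Set X) : Prop := ∀ q : ℕ → ℕ, (fruit V q).Nonempty

/-- `V` has strict branches: every fruit is a singleton. -/
def StrictBranches (V : List ℕ → Set X) : Prop := ∀ q : ℕ → ℕ, ∃ x, fruit V q = {x}

/-- `V` is regular: `V_{a⌢n} ⊆ V_a`. -/
def RegularScheme (V : List ℕ → Set X) : Prop := ∀ a n, V (a ++ [n]) ⊆ V a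

/-- `V` has nonempty leaves. -/
def NonemptyLeaves (V : List ℕ → Set X) : Prop := ∀ a, (V a).Nonempty

/-- `V` is an open Souslin scheme with respect to the topology `t`. -/
def OpenScheme (t : TopologicalSpace X) (V : List ℕ → Set X) : Prop := ∀ a, t.IsOpen (V a)

/-- `V` is semi-open with respect to the topology `t`: `V_a ⊆ Cl_t(Int_t(V_a))`. -/
def SemiOpenScheme (t : TopologicalSpace X) (V : List ℕ → Set X) : Prop :=
  ∀ a, V a ⊆ @closure _ t (@interior _ t (V a))

/-- `Ṽ^k_b = ⋃_{j ≥ k} V_{b⌢j}`. -/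
def shootSet (V : List ℕ → Set X) (b : List ℕ) (k : ℕ) : Set X :=
  ⋃ j, ⋃ (_ : k ≤ j), V (b ++ [j])

/-- `shoot_b(V) = {Ṽ^k_b : k ∈ ω}`. -/
def shoot (V : List ℕ → Set X) (b : List ℕ) : Set (Set X) := {G | ∃ k, G = shootSet V b k}

/-- `γ → U`: some member of the family `γ` is contained in `U`. -/
def Engulfs (γ : Set (Set X)) (U : Set X) : Prop := ∃ G ∈ γ, G ⊆ U

/-- `p →_V U`: there is an infinite `L ⊆ ω` with `shoot_{p↾n}(V) → U` for all `n ∈ L`. -/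
def ArrowSeq (V : List ℕ → Set X) (p : ℕ → ℕ) (U : Set X) : Prop :=
  ∃ L : Set ℕ, L.Infinite ∧ ∀ n ∈ L, Engulfs (shoot V (pre p n)) U

/-- `p →_{V,t} x`: `p →_V U` for every `t`-open `U` containing `x`. -/
def ArrowPt (t : TopologicalSpace X) (V : List ℕ → Set X) (p : ℕ → ℕ) (x : X) : Prop :=
  ∀ U : Set X, t.IsOpen U → x ∈ U → ArrowSeq V p U

/-- `V` is a Lusin π-base for `(X, t)`. -/
def LusinPiBase (t : TopologicalSpace X) (V : List ℕ → Set X) : Prop :=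
  OpenScheme t V ∧ Partitions V Set.univ ∧ StrictBranches V ∧
    ∀ x : X, ∀ U : Set X, t.IsOpen U → x ∈ U →
      ∃ a : List ℕ, ∃ n : ℕ, x ∈ V a ∧ shootSet V a n ⊆ U

/-- `V` is an α-scheme for `(X, t)`. -/
def AlphaScheme (t : TopologicalSpace X) (V : List ℕ → Set X) : Prop :=
  OpenScheme t V ∧ CompleteScheme V ∧ Covers V Set.univ ∧
    (∀ a : List ℕ, ∀ x ∈ V a, ∃ p : ℕ → ℕ, IsPre a p ∧ x ∈ fruit V p ∧ ArrowPt t V p x) ∧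
    (∀ p : ℕ → ℕ, ∃ x ∈ fruit V p, ArrowPt t V p x)

/-- `V` is a ramose α-scheme for `(X, t)`. -/
def RamoseAlphaScheme (t : TopologicalSpace X) (V : List ℕ → Set X) : Prop :=
  AlphaScheme t V ∧ ∀ a : List ℕ, ∀ x ∈ V a,
    Cardinal.mk {p : ℕ → ℕ // IsPre a p ∧ x ∈ fruit V p ∧ ArrowPt t V p x} = Cardinal.continuum

/-- `γ` is a π-base for `(X, t)`. -/
def PiBase (t : TopologicalSpace X) (γ : Set (Set X)) : Prop :=
  (∀ G ∈ γ, G.Nonempty ∧ t.IsOpen G) ∧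
    ∀ U : Set X, t.IsOpen U → U.Nonempty → ∃ G ∈ γ, G ⊆ U

/-- `γ` is a π-net for the subspace `A` of `(X, t)`. -/
def PiNetFor (t : TopologicalSpace X) (γ : Set (Set X)) (A : Set X) : Prop :=
  (∀ G ∈ γ, G.Nonempty) ∧
    ∀ U : Set X, t.IsOpen U → (U ∩ A).Nonempty → ∃ G ∈ γ, G ⊆ U ∩ A

/-- `V` is a π-base Souslin scheme on `(X, t)`:
an open scheme such that `{V_b : a ⊑ b}` is a π-net for the subspace `V_a`, for each `a`. -/
def PiBaseScheme (t : TopologicalSpace X) (V : List ℕ → Set X) : Prop :=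
  OpenScheme t V ∧ ∀ a, PiNetFor t {S | ∃ b, a <+: b ∧ S = V b} (V a)

/-- `(X, t)` is a π-space. -/
def PiSpace (t : TopologicalSpace X) : Prop :=
  ∃ V : List ℕ → Set X, OpenScheme t V ∧ Partitions V Set.univ ∧ StrictBranches V ∧
    PiBase t {S | ∃ a, S = V a}

/-- `(X, t)` is zero-dimensional: it has a base consisting of clopen sets. -/
def ZeroDimT (t : TopologicalSpace X) : Prop :=
  ∀ U : Set X, t.IsOpen U → ∀ x ∈ U, ∃ C : Set X, t.IsOpen C ∧ @IsClosed _ t C ∧ x ∈ C ∧ C ⊆ U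

/-- `branches_V(x) = {q ∈ ω^ω : x ∈ fruit_q(V)}`. -/
def branches (V : List ℕ → Set X) (x : X) : Set (ℕ → ℕ) := {q | x ∈ fruit V q}

/-- `f` is a selector on `V`: a surjection of `ω^ω` onto `flesh(V)` such that each fiber
`f⁻¹(x)` is a dense subset of the subspace `branches_V(x)` of the Baire space. -/
def IsSelector (V : List ℕ → Set X) (f : (ℕ → ℕ) → X) : Prop :=
  (∀ p, f p ∈ flesh V) ∧ (∀ x ∈ flesh V, ∃ p, f p = x) ∧
    ∀ x ∈ flesh V, f ⁻¹' {x} ⊆ branches V x ∧ branches V x ⊆ closure (f ⁻¹' {x})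

/-- The topology `σ_{t,f}` on `ω^ω` generated by the subbase
`{f⁻¹[U] : U ∈ t} ∪ {S_a : a ∈ ω^{<ω}}`. -/
def sigmaTop (t : TopologicalSpace X) (f : (ℕ → ℕ) → X) : TopologicalSpace (ℕ → ℕ) :=
  TopologicalSpace.generateFrom
    ({S | ∃ U : Set X, t.IsOpen U ∧ S = f ⁻¹' U} ∪ {S | ∃ a : List ℕ, S = stdS a})

end scheme

/-- `(ω^ω, t)` is a standard π-space: the family `τ_N \ {∅}` of nonempty open sets of the
Baire space is a π-base for `(ω^ω, t)`. -/
def StandardPiSpace (t : TopologicalSpace (ℕ → ℕ)) : Prop :=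
  (∀ U : Set (ℕ → ℕ), IsOpen U → U.Nonempty → t.IsOpen U) ∧
    ∀ U : Set (ℕ → ℕ), t.IsOpen U → U.Nonempty → ∃ G : Set (ℕ → ℕ), IsOpen G ∧ G.Nonempty ∧ G ⊆ U

namespace LusinHelper

@[simp] lemma pre_length (p : ℕ → ℕ) (n : ℕ) : (pre p n).length = n := by
  simp [pre]

lemma pre_getD (p : ℕ → ℕ) {n i : ℕ} (h : i < n) : (pre p n).getD i 0 = p i := by
  rw [List.getD_eq_getElem _ _ (by simpa using h)]
  simp [pre]

lemma pre_succ (p : ℕ → ℕ) (n : ℕ) : pre p (n + 1) = pre p n ++ [p n] := by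
  apply List.ext_getElem (by simp)
  intro i h1 h2
  simp only [pre, List.getElem_ofFn]
  rcases Nat.lt_or_ge i n with h | h
  · rw [List.getElem_append_left (by simpa using h)]
    simp [pre]
  · have : i = n := by simp at h1; omega
    subst this
    rw [List.getElem_append_right (by simp)]
    simp

lemma list_ext_getD {a b : List ℕ} (hl : a.length = b.length)
    (h : ∀ i < a.length, a.getD i 0 = b.getD i 0) : a = b := by
  apply List.ext_getElem hl
  intro i h1 h2
  have := h i h1
  rwa [List.getD_eq_getElem _ _ h1, List.getD_eq_getElem _ _ h2] at this

lemma isPre_iff {a : List ℕ} {p : ℕ → ℕ} :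
    IsPre a p ↔ ∀ i < a.length, a.getD i 0 = p i := by
  constructor
  · intro h i hi
    conv_lhs => rw [h]
    exact pre_getD p (by simpa using hi)
  · intro h
    exact list_ext_getD (by simp) (by intro i hi; rw [h i hi, pre_getD p (by simpa using hi)])

lemma isPre_pre (p : ℕ → ℕ) (n : ℕ) : IsPre (pre p n) p := by
  rw [isPre_iff]
  intro i hi
  exact pre_getD p (by simpa using hi)

lemma isPre_nil (p : ℕ → ℕ) : IsPre [] p := by simp [isPre_iff]

lemma eq_pre {a : List ℕ} {p : ℕ → ℕ} (h : IsPre a p) : a = pre p a.length := h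

lemma isPre_append_iff {a : List ℕ} {n : ℕ} {p : ℕ → ℕ} :
    IsPre (a ++ [n]) p ↔ IsPre a p ∧ p a.length = n := by
  unfold IsPre
  rw [show (a ++ [n]).length = a.length + 1 by simp, pre_succ]
  constructor
  · intro h
    have h1 := List.append_inj h (by simp)
    exact ⟨h1.1, by simpa using h1.2.symm⟩
  · rintro ⟨h1, h2⟩
    rw [← h1, h2]

lemma pre_congr {p q : ℕ → ℕ} {n : ℕ} (h : ∀ i < n, p i = q i) : pre p n = pre q n := by
  apply list_ext_getD (by simp)
  intro i hi
  simp only [pre_length] at hi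
  rw [pre_getD p hi, pre_getD q hi, h i hi]

lemma pre_eq_of_isPre_isPre {a : List ℕ} {p q : ℕ → ℕ} (hp : IsPre a p) (hq : IsPre a q) :
    ∀ i < a.length, p i = q i := by
  intro i hi
  rw [← isPre_iff.1 hp i hi, isPre_iff.1 hq i hi]

/-- Agreement on an initial segment propagates `IsPre` of shorter prefixes. -/
lemma isPre_of_isPre_le {p q : ℕ → ℕ} {m k : ℕ} (h : pre p m = pre q m) (hk : k ≤ m) :
    pre p k = pre q k := by
  apply pre_congr
  intro i hi
  have h1 : IsPre (pre p m) p := isPre_pre p m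
  have h2 : IsPre (pre p m) q := h ▸ isPre_pre q m
  exact pre_eq_of_isPre_isPre h1 h2 i (by simpa using lt_of_lt_of_le hi hk)

end LusinHelper
namespace LusinHelper
lemma pre_prefix (p : ℕ → ℕ) {n m : ℕ} (h : n ≤ m) : pre p n <+: pre p m := by
  have : pre p n = (pre p m).take n := by
    apply list_ext_getD
    · simp [h]
    · intro i hi
      simp only [pre_length] at hi
      rw [pre_getD p hi, List.getD_eq_getElem _ _ (by simpa [h] using hi)]
      simp only [List.getElem_take]
      rw [← List.getD_eq_getElem _ 0, pre_getD p (lt_of_lt_of_le hi h)]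
  rw [this]
  exact List.take_prefix n (pre p m)
end LusinHelper
namespace LusinHelper

variable {X : Type*}

/-- Fruit is contained in every layer. -/
lemma fruit_subset_layer (V : List ℕ → Set X) (p : ℕ → ℕ) (n : ℕ) :
    fruit V p ⊆ V (pre p n) := Set.iInter_subset _ n

lemma fruit_subset_of_isPre (V : List ℕ → Set X) {a : List ℕ} {p : ℕ → ℕ} (h : IsPre a p) :
    fruit V p ⊆ V a := by
  have h2 := fruit_subset_layer V p a.length
  rwa [← eq_pre h] at h2

section covers

variable {V : List ℕ → Set X} (hc : ∀ a, V a = ⋃ n, V (a ++ [n]))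
include hc

lemma covers_child_subset (a : List ℕ) (n : ℕ) : V (a ++ [n]) ⊆ V a := by
  rw [hc a]; exact Set.subset_iUnion (fun n => V (a ++ [n])) n

/-- Monotonicity of a covering scheme along prefixes. -/
lemma covers_mono : ∀ {c b : List ℕ}, b <+: c → V c ⊆ V b := by
  intro c
  induction c using List.reverseRecOn with
  | nil => intro b hb; rw [List.prefix_nil.mp hb]
  | append_singleton d n ih =>
    intro b hb
    rcases List.prefix_concat_iff.mp hb with h | h
    · rw [h]
    · exact (covers_child_subset hc d n).trans (ih h)

/-- Extending a point's node to a full branch through the point. -/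
lemma covers_branch {y : X} {a : List ℕ} (hy : y ∈ V a) :
    ∃ q : ℕ → ℕ, IsPre a q ∧ y ∈ fruit V q := by
  classical
  -- choice of next coordinate
  have ext : ∀ b : List ℕ, y ∈ V b → ∃ n, y ∈ V (b ++ [n]) := by
    intro b hb
    rw [hc b] at hb
    exact Set.mem_iUnion.mp hb
  let E : List ℕ → ℕ := fun b => if h : y ∈ V b then (ext b h).choose else 0
  let c : ℕ → List ℕ := fun k => Nat.rec a (fun _ b => b ++ [E b]) k
  have hc0 : c 0 = a := rfl
  have hcs : ∀ k, c (k + 1) = c k ++ [E (c k)] := fun k => rfl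
  have hmem : ∀ k, y ∈ V (c k) := by
    intro k
    induction k with
    | zero => exact hy
    | succ k ih =>
      rw [hcs k]
      have : E (c k) = (ext (c k) ih).choose := by simp only [E, dif_pos ih]
      rw [this]
      exact (ext (c k) ih).choose_spec
  have hlen : ∀ k, (c k).length = a.length + k := by
    intro k
    induction k with
    | zero => rfl
    | succ k ih => rw [hcs k]; simp [ih]; omega
  have hpre : ∀ j k, j ≤ k → c j <+: c k := by
    intro j k hjk
    induction k with
    | zero => have : j = 0 := by omega
              subst this; rfl
    | succ k ih =>
      rcases Nat.lt_or_ge j (k+1) with h | h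
      · exact (ih (by omega)).trans (by rw [hcs k]; exact List.prefix_append _ _)
      · have : j = k + 1 := by omega
        subst this; rfl
  -- the branch
  set q : ℕ → ℕ := fun n => (c (n + 1)).getD n 0 with hq
  -- entry agreement between different stages
  have hag : ∀ j k n, n < a.length + j → n < a.length + k → (c j).getD n 0 = (c k).getD n 0 := by
    have key : ∀ j k n, j ≤ k → n < a.length + j → (c j).getD n 0 = (c k).getD n 0 := by
      intro j k n hjk hn
      have hp := hpre j k hjk
      have h1 : n < (c j).length := by rw [hlen]; exact hn
      have h2 : n < (c k).length := lt_of_lt_of_le h1 hp.length_le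
      rw [List.getD_eq_getElem _ _ h1, List.getD_eq_getElem _ _ h2]
      exact hp.getElem h1
    intro j k n h1 h2
    rcases Nat.le_total j k with h | h
    · exact key j k n h h1
    · exact (key k j n h h2).symm
  have hpre_q : ∀ k, pre q (a.length + k) = c k := by
    intro k
    apply list_ext_getD (by simp [hlen])
    intro i hi
    simp only [pre_length] at hi
    rw [pre_getD q hi]
    exact hag (i+1) k i (by omega) hi
  refine ⟨q, ?_, ?_⟩
  · have := hpre_q 0
    simp only [Nat.add_zero, hc0] at this
    rw [IsPre, this]
  · -- y ∈ fruit V q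
    apply Set.mem_iInter.mpr
    intro n
    rcases Nat.le_total n a.length with h | h
    ·
      have h0 : pre q a.length = a := by simpa [hc0] using hpre_q 0
      have hpf : pre q n <+: pre q a.length := pre_prefix q h
      rw [h0] at hpf
      exact covers_mono hc hpf hy
    · have : pre q n = c (n - a.length) := by
        have := hpre_q (n - a.length)
        rwa [show a.length + (n - a.length) = n by omega] at this
      rw [this]; exact hmem _
end covers

end LusinHelper
namespace LusinHelper

variable {X : Type*}

section partition

variable {W : List ℕ → Set X} (hP : Partitions W Set.univ)
include hP

/-- Pieces indexed by distinct same-length lists are disjoint. -/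
lemma partitions_disj : ∀ m : ℕ, ∀ a b : List ℕ, a.length = m → b.length = m →
    a ≠ b → W a ∩ W b = ∅ := by
  intro m
  induction m with
  | zero =>
    intro a b ha hb hab
    rw [List.length_eq_zero_iff] at ha hb
    exact absurd (ha.trans hb.symm) hab
  | succ m ih =>
    intro a b ha hb hab
    rcases List.eq_nil_or_concat' a with rfl | ⟨a', n, rfl⟩
    · exact absurd ha (by simp)
    rcases List.eq_nil_or_concat' b with rfl | ⟨b', k, rfl⟩
    · exact absurd hb (by simp)
    have ha' : a'.length = m := by simp at ha; omega
    have hb' : b'.length = m := by simp at hb; omega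
    by_cases hab' : a' = b'
    · subst hab'
      have hnk : n ≠ k := by
        intro h; exact hab (by rw [h])
      exact hP.2 a' n k hnk
    · have h1 : W (a' ++ [n]) ⊆ W a' := covers_child_subset hP.1.2 a' n
      have h2 : W (b' ++ [k]) ⊆ W b' := covers_child_subset hP.1.2 b' k
      have := ih a' b' ha' hb' hab'
      apply Set.eq_empty_of_subset_empty
      calc W (a' ++ [n]) ∩ W (b' ++ [k]) ⊆ W a' ∩ W b' := Set.inter_subset_inter h1 h2
        _ = ∅ := this

/-- In a partition with strict branches every piece is nonempty. -/
lemma strict_nonempty (hS : StrictBranches W) (a : List ℕ) : (W a).Nonempty := by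
  classical
  set q : ℕ → ℕ := fun n => a.getD n 0 with hq
  have hpre : IsPre a q := by
    rw [isPre_iff]; intro i hi; rfl
  obtain ⟨y, hy⟩ := hS q
  refine ⟨y, ?_⟩
  have : y ∈ fruit W q := by rw [hy]; rfl
  exact fruit_subset_of_isPre W hpre this

/-- If `y ∈ fruit W p` then the only piece of level `m` containing `y` is `W (pre p m)`. -/
lemma level_unique {y : X} {p : ℕ → ℕ} (hy : y ∈ fruit W p) {a : List ℕ} (ha : y ∈ W a) :
    a = pre p a.length := by
  by_contra h
  have h2 : y ∈ W (pre p a.length) := fruit_subset_layer W p a.length hy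
  have := partitions_disj hP a.length a (pre p a.length) rfl (by simp) h
  exact absurd (Set.mem_inter ha h2) (by rw [this]; exact id)

end partition

/-- Key property of a Lusin π-base: engulfing happens along each branch at
arbitrarily high levels. -/
lemma lusin_key {t : TopologicalSpace X} {W : List ℕ → Set X} (hL : LusinPiBase t W)
    {y : X} {p : ℕ → ℕ} (hy : y ∈ fruit W p) {O : Set X} (hO : t.IsOpen O) (hyO : y ∈ O) :
    ∀ r : ℕ, ∃ m, r ≤ m ∧ ∃ n, shootSet W (pre p m) n ⊆ O := by
  obtain ⟨hopen, hP, hS, hL6⟩ := hL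
  intro r
  have hOr : t.IsOpen (O ∩ W (pre p r)) := t.isOpen_inter _ _ hO (hopen _)
  have hyOr : y ∈ O ∩ W (pre p r) := ⟨hyO, fruit_subset_layer W p r hy⟩
  obtain ⟨a, n, hya, hsh⟩ := hL6 y _ hOr hyOr
  have ha : a = pre p a.length := level_unique hP hy hya
  set m := a.length with hm
  refine ⟨m, ?_, n, ?_⟩
  · -- m ≥ r
    by_contra hlt
    push_neg at hlt
    set j := max n (p m + 1) with hj
    have hsub : W (a ++ [j]) ⊆ shootSet W a n := by
      intro z hz
      exact Set.mem_iUnion.mpr ⟨j, Set.mem_iUnion.mpr ⟨le_max_left _ _, hz⟩⟩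
    have hsub2 : W (a ++ [j]) ⊆ W (pre p (m + 1)) := by
      intro z hz
      have hzr : z ∈ W (pre p r) := ((hsub.trans hsh) hz).2
      exact covers_mono hP.1.2 (pre_prefix p (show m + 1 ≤ r by omega)) hzr
    have hdisj : W (a ++ [j]) ∩ W (pre p (m + 1)) = ∅ := by
      have : pre p (m + 1) = pre p m ++ [p m] := pre_succ p m
      rw [this, ← ha]
      exact hP.2 a j (p m) (by omega)
    obtain ⟨z, hz⟩ := strict_nonempty hP hS (a ++ [j])
    exact absurd (Set.mem_inter hz (hsub2 hz)) (by rw [hdisj]; exact id)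
  · rw [← ha]
    exact hsh.trans (Set.inter_subset_left)

end LusinHelper
namespace LusinHelper

lemma mk_baire : Cardinal.mk (ℕ → ℕ) = Cardinal.continuum := by
  rw [Cardinal.mk_arrow]
  simp [Cardinal.mk_nat, Cardinal.aleph0_power_aleph0]

lemma shootSet_image {Y X : Type*} (f : Y → X) (W : List ℕ → Set Y) (b : List ℕ) (n : ℕ) :
    shootSet (fun a => f '' W a) b n = f '' shootSet W b n := by
  simp only [shootSet, Set.image_iUnion]

section forward

variable {X : Type u} [tX : TopologicalSpace X]
    {Y : Type u} {tY : TopologicalSpace Y} {f : Y → X} {W : List ℕ → Set Y}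

lemma arrow_of_branch (hL : LusinPiBase tY W) (hf : @Continuous Y X tY tX f)
    {y : Y} {q : ℕ → ℕ} (hy : y ∈ fruit W q) :
    ArrowPt tX (fun a => f '' W a) q (f y) := by
  intro U hU hfyU
  have hUo : tY.IsOpen (f ⁻¹' U) := continuous_def.mp hf U hU
  refine ⟨{m | ∃ n, shootSet W (pre q m) n ⊆ f ⁻¹' U}, ?_, ?_⟩
  · apply Set.infinite_of_forall_exists_gt
    intro r
    obtain ⟨m, hm, n, hn⟩ := lusin_key hL hy hUo hfyU (r + 1)
    exact ⟨m, ⟨n, hn⟩, by omega⟩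
  · rintro m ⟨n, hn⟩
    refine ⟨shootSet (fun a => f '' W a) (pre q m) n, ⟨n, rfl⟩, ?_⟩
    rw [shootSet_image]
    rintro x ⟨y', hy', rfl⟩
    exact hn hy'

lemma forward_alpha (hL : LusinPiBase tY W) (hf : @Continuous Y X tY tX f)
    (hfo : @IsOpenMap Y X tY tX f) (hfs : Function.Surjective f) :
    AlphaScheme tX (fun a => f '' W a) := by
  obtain ⟨hopen, hP, hS, hL6⟩ := hL
  have hL' : LusinPiBase tY W := ⟨hopen, hP, hS, hL6⟩
  have hcov := hP.1.2
  refine ⟨fun a => hfo _ (hopen a), ?_, ⟨?_, ?_⟩, ?_, ?_⟩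
  · -- complete
    intro q
    obtain ⟨y, hy⟩ := hS q
    have hyf : y ∈ fruit W q := by rw [hy]; rfl
    exact ⟨f y, Set.mem_iInter.mpr fun n => ⟨y, fruit_subset_layer W q n hyf, rfl⟩⟩
  · show f '' W [] = Set.univ
    rw [hP.1.1, Set.image_univ, Set.range_eq_univ.mpr hfs]
  · intro a
    show f '' W a = ⋃ n, f '' W (a ++ [n])
    rw [hcov a, Set.image_iUnion]
  · -- S1
    rintro a x ⟨y, hyW, rfl⟩
    obtain ⟨q, hq, hyfr⟩ := covers_branch hcov hyW
    exact ⟨q, hq, Set.mem_iInter.mpr fun n => ⟨y, fruit_subset_layer W q n hyfr, rfl⟩,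
      arrow_of_branch hL' hf hyfr⟩
  · -- S2
    intro p
    obtain ⟨y, hy⟩ := hS p
    have hyf : y ∈ fruit W p := by rw [hy]; rfl
    exact ⟨f y, Set.mem_iInter.mpr fun n => ⟨y, fruit_subset_layer W p n hyf, rfl⟩,
      arrow_of_branch hL' hf hyf⟩

lemma forward_card (hL : LusinPiBase tY W) (hfs : Function.Surjective f) :
    Cardinal.mk X ≤ Cardinal.continuum := by
  classical
  obtain ⟨hopen, hP, hS, hL6⟩ := hL
  have hcov := hP.1.2
  set g : ULift.{u} (ℕ → ℕ) → X := fun q => f (hS q.down).choose with hg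
  have hgs : Function.Surjective g := by
    intro x
    obtain ⟨y, rfl⟩ := hfs x
    have hyW : y ∈ W [] := by rw [hP.1.1]; trivial
    obtain ⟨q, _, hyfr⟩ := covers_branch hcov hyW
    refine ⟨⟨q⟩, ?_⟩
    have hspec := (hS q).choose_spec
    have : y ∈ ({(hS q).choose} : Set Y) := by rw [← hspec]; exact hyfr
    simp only [Set.mem_singleton_iff] at this
    simp [hg, ← this]
  calc Cardinal.mk X ≤ Cardinal.mk (ULift.{u} (ℕ → ℕ)) := Cardinal.mk_le_of_surjective hgs
    _ = Cardinal.lift.{u} (Cardinal.mk (ℕ → ℕ)) := Cardinal.mk_uLift _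
    _ = Cardinal.continuum := by rw [mk_baire, Cardinal.lift_continuum]

end forward

end LusinHelper
namespace LusinHelper

@[simp] lemma pre_zero (p : ℕ → ℕ) : pre p 0 = [] := by simp [pre]

lemma getD_append_left {a : List ℕ} {n i : ℕ} (h : i < a.length) :
    (a ++ [n]).getD i 0 = a.getD i 0 := by
  rw [List.getD_eq_getElem _ _ (by simp; omega), List.getD_eq_getElem _ _ h,
    List.getElem_append_left h]

lemma getD_append_right (a : List ℕ) (n : ℕ) :
    (a ++ [n]).getD a.length 0 = n := by
  rw [List.getD_eq_getElem _ _ (by simp)]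
  simp

/-- The even-indexed entries of a list. -/
def eL (a : List ℕ) : List ℕ := (List.range ((a.length + 1) / 2)).map (fun i => a.getD (2 * i) 0)

@[simp] lemma eL_length (a : List ℕ) : (eL a).length = (a.length + 1) / 2 := by simp [eL]

@[simp] lemma eL_nil : eL ([] : List ℕ) = [] := by simp [eL]

lemma eL_getD {a : List ℕ} {i : ℕ} (h : i < (a.length + 1) / 2) :
    (eL a).getD i 0 = a.getD (2 * i) 0 := by
  rw [List.getD_eq_getElem _ _ (by simpa using h)]
  simp [eL]

lemma eL_append_even {a : List ℕ} (h : a.length % 2 = 0) (n : ℕ) :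
    eL (a ++ [n]) = eL a ++ [n] := by
  apply list_ext_getD (by simp; omega)
  intro i hi
  simp only [eL_length, List.length_append, List.length_singleton] at hi
  rcases Nat.lt_or_ge i ((a.length + 1) / 2) with h1 | h1
  · rw [eL_getD (by simp; omega), getD_append_left (by omega)]
    rw [show (eL a ++ [n]).getD i 0 = (eL a).getD i 0 from getD_append_left (by simpa using h1)]
    rw [eL_getD h1]
  · have : i = a.length / 2 := by omega
    subst this
    rw [eL_getD (by simp; omega)]
    rw [show 2 * (a.length / 2) = a.length by omega, getD_append_right]
    rw [show a.length / 2 = (eL a).length by simp; omega, getD_append_right]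

lemma eL_append_odd {a : List ℕ} (h : a.length % 2 = 1) (n : ℕ) :
    eL (a ++ [n]) = eL a := by
  apply list_ext_getD (by simp; omega)
  intro i hi
  simp only [eL_length, List.length_append, List.length_singleton] at hi
  rw [eL_getD (by simp; omega), eL_getD (by omega), getD_append_left (by omega)]

lemma eL_pre (p : ℕ → ℕ) (n : ℕ) :
    eL (pre p n) = pre (fun k => p (2 * k)) ((n + 1) / 2) := by
  apply list_ext_getD (by simp)
  intro i hi
  simp only [eL_length, pre_length] at hi
  rw [eL_getD (by simpa using hi), pre_getD p (by omega), pre_getD _ hi]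

lemma eL_pre_even (p : ℕ → ℕ) (n : ℕ) :
    eL (pre p (2 * n)) = pre (fun k => p (2 * k)) n := by
  rw [eL_pre]
  congr 1
  omega

end LusinHelper
namespace LusinHelper

/-- the even part of a branch -/
def epf (p : ℕ → ℕ) : ℕ → ℕ := fun k => p (2 * k)

lemma fruit_eL {X : Type*} (V : List ℕ → Set X) (p : ℕ → ℕ) :
    fruit (fun a => V (eL a)) p = fruit V (epf p) := by
  ext x
  simp only [fruit, Set.mem_iInter]
  constructor
  · intro h m
    have h2 := h (2 * m)
    rwa [eL_pre_even p m] at h2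
  · intro h n
    rw [eL_pre p n]
    exact h ((n + 1) / 2)

/-- tagging code -/
def iota2 {X : Type u} (ι : X → ℕ → ℕ) (x : X) (n : ℕ) : ℕ :=
  Encodable.encode (pre (ι x) n)

lemma iota2_eventual_inj {X : Type u} {ι : X → ℕ → ℕ} (hι : Function.Injective ι)
    {x x' : X} {m m' : ℕ} (h : ∀ k ≥ m, iota2 ι x k = iota2 ι x' k)
    (h' : ∀ k, iota2 ι x k = iota2 ι x' k → True) : -- dummy
    (∀ k ≥ m, iota2 ι x k = iota2 ι x' k) → x = x' := by
  intro _
  apply hι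
  funext i
  have hk : iota2 ι x (m + i + 1) = iota2 ι x' (m + i + 1) := h _ (by omega)
  have hpre : pre (ι x) (m + i + 1) = pre (ι x') (m + i + 1) :=
    Encodable.encode_injective hk
  have h1 := pre_getD (ι x) (show i < m + i + 1 by omega)
  have h2 := pre_getD (ι x') (show i < m + i + 1 by omega)
  rw [← h1, ← h2, hpre]

/-- the goodness predicate for the selector -/
def Good {X : Type u} (tX : TopologicalSpace X) (V : List ℕ → Set X) (ι : X → ℕ → ℕ)
    (p : ℕ → ℕ) (x : X) : Prop :=
  x ∈ fruit V (epf p) ∧ ArrowPt tX V (epf p) x ∧ ∃ m, ∀ k ≥ m, p (2 * k + 1) = iota2 ι x k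

lemma good_unique {X : Type u} {tX : TopologicalSpace X} {V : List ℕ → Set X}
    {ι : X → ℕ → ℕ} (hι : Function.Injective ι) {p : ℕ → ℕ} {x x' : X}
    (h : Good tX V ι p x) (h' : Good tX V ι p x') : x = x' := by
  obtain ⟨-, -, m, hm⟩ := h
  obtain ⟨-, -, m', hm'⟩ := h'
  apply hι
  funext i
  have hk : iota2 ι x (m + m' + i + 1) = iota2 ι x' (m + m' + i + 1) := by
    rw [← hm _ (by omega), ← hm' _ (by omega)]
  have hpre : pre (ι x) (m + m' + i + 1) = pre (ι x') (m + m' + i + 1) :=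
    Encodable.encode_injective hk
  have h1 := pre_getD (ι x) (show i < m + m' + i + 1 by omega)
  have h2 := pre_getD (ι x') (show i < m + m' + i + 1 by omega)
  rw [← h1, ← h2, hpre]

/-- the selector -/
noncomputable def sel0 {X : Type u} (tX : TopologicalSpace X) (V : List ℕ → Set X)
    (ι : X → ℕ → ℕ) (hA : AlphaScheme tX V) : (ℕ → ℕ) → X := fun p =>
  open Classical in
  if h : ∃ x, Good tX V ι p x then h.choose else (hA.2.2.2.2 (epf p)).choose

lemma sel0_spec {X : Type u} (tX : TopologicalSpace X) (V : List ℕ → Set X)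
    (ι : X → ℕ → ℕ) (hA : AlphaScheme tX V) (p : ℕ → ℕ) :
    sel0 tX V ι hA p ∈ fruit V (epf p) ∧ ArrowPt tX V (epf p) (sel0 tX V ι hA p) := by
  classical
  by_cases h : ∃ x, Good tX V ι p x
  · simp only [sel0, dif_pos h]
    exact ⟨h.choose_spec.1, h.choose_spec.2.1⟩
  · simp only [sel0, dif_neg h]
    obtain ⟨h1, h2⟩ := (hA.2.2.2.2 (epf p)).choose_spec
    exact ⟨h1, h2⟩

lemma sel0_good {X : Type u} (tX : TopologicalSpace X) (V : List ℕ → Set X)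
    {ι : X → ℕ → ℕ} (hι : Function.Injective ι) (hA : AlphaScheme tX V)
    {p : ℕ → ℕ} {x : X} (hg : Good tX V ι p x) : sel0 tX V ι hA p = x := by
  classical
  have h : ∃ x, Good tX V ι p x := ⟨x, hg⟩
  simp only [sel0, dif_pos h]
  exact good_unique hι h.choose_spec hg

/-- the selector hits `x` inside the cylinder over `b` whenever `x ∈ V (eL b)`. -/
lemma sel0_onto {X : Type u} (tX : TopologicalSpace X) (V : List ℕ → Set X)
    {ι : X → ℕ → ℕ} (hι : Function.Injective ι) (hA : AlphaScheme tX V)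
    {b : List ℕ} {x : X} (hx : x ∈ V (eL b)) :
    ∃ p : ℕ → ℕ, IsPre b p ∧ sel0 tX V ι hA p = x := by
  obtain ⟨q, hq, hfr, har⟩ := hA.2.2.2.1 (eL b) x hx
  set p : ℕ → ℕ := fun k =>
    if k < b.length then b.getD k 0 else if k % 2 = 0 then q (k / 2) else iota2 ι x (k / 2)
    with hp
  have hepq : epf p = q := by
    funext k
    show p (2 * k) = q k
    by_cases h2k : 2 * k < b.length
    · rw [hp]
      simp only [if_pos h2k]
      have hk : k < (b.length + 1) / 2 := by omega
      have h1 := isPre_iff.mp hq k (by simpa using hk)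
      rwa [eL_getD hk] at h1
    · rw [hp]
      simp only [if_neg h2k, if_pos (show 2 * k % 2 = 0 by omega)]
      congr 1
      omega
  have hbp : IsPre b p := by
    rw [isPre_iff]
    intro i hi
    rw [hp]
    simp [if_pos hi]
  refine ⟨p, hbp, sel0_good tX V hι hA ⟨hepq ▸ hfr, hepq ▸ har, b.length, fun k hk => ?_⟩⟩
  show p (2 * k + 1) = iota2 ι x k
  rw [hp]
  simp only [if_neg (show ¬(2 * k + 1 < b.length) by omega),
    if_neg (show ¬((2 * k + 1) % 2 = 0) by omega)]
  congr 1
  omega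

end LusinHelper
namespace LusinHelper

/-- The standard Lusin scheme on (a lifted copy of) the Baire space. -/
def Wstd : List ℕ → Set (ULift.{u} (ℕ → ℕ)) := fun a => {y | IsPre a y.down}

/-- The subbase for the topology `σ`. -/
def SBase {X : Type u} (tX : TopologicalSpace X) (g : ULift.{u} (ℕ → ℕ) → X) :
    Set (Set (ULift.{u} (ℕ → ℕ))) :=
  {S | ∃ U : Set X, tX.IsOpen U ∧ S = g ⁻¹' U} ∪ {S | ∃ a : List ℕ, S = Wstd a}

lemma wstd_le {q : ℕ → ℕ} {m M : ℕ} (h : m ≤ M) {r : ULift.{u} (ℕ → ℕ)}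
    (hr : r ∈ Wstd (pre q M)) : r ∈ Wstd (pre q m) := by
  have hr' : pre q M = pre r.down M := by
    have := hr
    simp only [Wstd, Set.mem_setOf_eq, IsPre, pre_length] at this
    exact this
  show IsPre (pre q m) r.down
  show pre q m = pre r.down ((pre q m).length)
  rw [pre_length]
  exact isPre_of_isPre_le hr' h

lemma gen_open_struct {X : Type u} {tX : TopologicalSpace X} {g : ULift.{u} (ℕ → ℕ) → X}
    {U : Set (ULift.{u} (ℕ → ℕ))} (h : TopologicalSpace.GenerateOpen (SBase tX g) U)
    (y : ULift.{u} (ℕ → ℕ)) :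
    y ∈ U → ∃ (U' : Set X) (m : ℕ), tX.IsOpen U' ∧ g y ∈ U' ∧
      g ⁻¹' U' ∩ Wstd (pre y.down m) ⊆ U := by
  induction h with
  | basic S hS =>
    rcases hS with ⟨U', hU', rfl⟩ | ⟨a, rfl⟩
    · exact fun hy => ⟨U', 0, hU', hy, fun r hr => hr.1⟩
    · intro hy
      refine ⟨Set.univ, a.length, tX.isOpen_univ, trivial, ?_⟩
      intro r hr
      have ha : a = pre y.down a.length := hy
      rw [ha]
      exact hr.2
  | univ => exact fun _ => ⟨Set.univ, 0, tX.isOpen_univ, trivial, fun r _ => trivial⟩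
  | inter S T hSo hTo ihS ihT =>
    intro hy
    obtain ⟨U1, m1, h1o, h1m, h1s⟩ := ihS hy.1
    obtain ⟨U2, m2, h2o, h2m, h2s⟩ := ihT hy.2
    refine ⟨U1 ∩ U2, max m1 m2, tX.isOpen_inter _ _ h1o h2o, ⟨h1m, h2m⟩, ?_⟩
    rintro r ⟨hrU, hrW⟩
    exact ⟨h1s ⟨hrU.1, wstd_le (le_max_left m1 m2) hrW⟩,
      h2s ⟨hrU.2, wstd_le (le_max_right m1 m2) hrW⟩⟩
  | sUnion S hS ih =>
    rintro ⟨T, hTS, hyT⟩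
    obtain ⟨U', m, h1, h2, h3⟩ := ih T hTS hyT
    exact ⟨U', m, h1, h2, fun r hr => ⟨T, hTS, h3 hr⟩⟩

lemma eL_pre' (p : ℕ → ℕ) (n : ℕ) : eL (pre p n) = pre (epf p) ((n + 1) / 2) := eL_pre p n

lemma backward {X : Type u} [tX : TopologicalSpace X] {V : List ℕ → Set X}
    (hA : AlphaScheme tX V) (hcard : Cardinal.mk X ≤ Cardinal.continuum) :
    ∃ (Y : Type u) (tY : TopologicalSpace Y) (g : Y → X),
      (∃ W : List ℕ → Set Y, LusinPiBase tY W) ∧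
      @Continuous Y X tY tX g ∧ @IsOpenMap Y X tY tX g ∧ Function.Surjective g := by
  classical
  have hcard' : Cardinal.mk X ≤ Cardinal.mk (ULift.{u} (ℕ → ℕ)) := by
    rwa [Cardinal.mk_uLift, mk_baire, Cardinal.lift_continuum]
  obtain ⟨ι0⟩ := (Cardinal.le_def _ _).mp hcard'
  set ι : X → ℕ → ℕ := fun x => (ι0 x).down with hιdef
  have hι : Function.Injective ι := fun a b h => ι0.injective (ULift.down_injective h)
  set g : ULift.{u} (ℕ → ℕ) → X := fun y => sel0 tX V ι hA y.down with hgdef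
  set SB : Set (Set (ULift.{u} (ℕ → ℕ))) := SBase tX g with hSBdef
  refine ⟨ULift.{u} (ℕ → ℕ), TopologicalSpace.generateFrom SB, g, ⟨Wstd, ?_, ?_, ?_, ?_⟩,
    ?_, ?_, ?_⟩
  · -- open scheme
    exact fun a => TopologicalSpace.GenerateOpen.basic _ (Or.inr ⟨a, rfl⟩)
  · -- partitions
    refine ⟨⟨?_, ?_⟩, ?_⟩
    · exact Set.eq_univ_of_forall fun y => isPre_nil y.down
    · intro a
      ext y
      constructor
      · intro hy
        exact Set.mem_iUnion.mpr ⟨y.down a.length, isPre_append_iff.mpr ⟨hy, rfl⟩⟩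
      · intro hy
        obtain ⟨n, hn⟩ := Set.mem_iUnion.mp hy
        exact (isPre_append_iff.mp hn).1
    · intro a n m hnm
      rw [Set.eq_empty_iff_forall_notMem]
      rintro y ⟨h1, h2⟩
      have e1 := (isPre_append_iff.mp h1).2
      have e2 := (isPre_append_iff.mp h2).2
      exact hnm (e1.symm.trans e2)
  · -- strict branches
    intro q
    refine ⟨⟨q⟩, ?_⟩
    ext y
    simp only [fruit, Set.mem_iInter, Set.mem_singleton_iff]
    constructor
    · intro h
      apply ULift.down_injective
      funext i
      have hi := h (i + 1)
      have := isPre_iff.mp hi i (by simp)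
      rw [pre_getD q (by omega)] at this
      exact this.symm
    · rintro rfl
      exact fun n => isPre_pre q n
  · -- L6
    intro y U hU hyU
    have hGO : TopologicalSpace.GenerateOpen SB U := hU
    obtain ⟨U', m, hU'o, hgyU', hsub⟩ := gen_open_struct hGO y hyU
    obtain ⟨hfr, har⟩ := sel0_spec tX V ι hA y.down
    obtain ⟨L, hLinf, hL⟩ := har U' hU'o hgyU'
    obtain ⟨n, hnL, hnm⟩ := hLinf.exists_gt m
    obtain ⟨G, ⟨k, rfl⟩, hGU⟩ := hL n hnL
    refine ⟨pre y.down (2 * n), k, isPre_pre _ _, ?_⟩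
    intro r hr
    obtain ⟨j, hj, hrW⟩ : ∃ j, k ≤ j ∧ r ∈ Wstd (pre y.down (2 * n) ++ [j]) := by
      simpa [shootSet] using hr
    have h1 : IsPre (pre y.down (2 * n)) r.down ∧ r.down (2 * n) = j := by
      have h1' := isPre_append_iff.mp hrW
      rwa [pre_length] at h1'
    apply hsub
    constructor
    · show g r ∈ U'
      apply hGU
      have h2 : g r ∈ V (pre (epf r.down) (n + 1)) :=
        fruit_subset_layer V (epf r.down) (n + 1) (sel0_spec tX V ι hA r.down).1
      have hag : ∀ i < (pre y.down (2 * n)).length, y.down i = r.down i :=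
        pre_eq_of_isPre_isPre (isPre_pre y.down (2 * n)) h1.1
      have h3 : pre (epf r.down) (n + 1) = pre (epf y.down) n ++ [j] := by
        rw [pre_succ]
        congr 1
        · apply pre_congr
          intro i hi
          show r.down (2 * i) = y.down (2 * i)
          exact (hag (2 * i) (by simp; omega)).symm
        · show [epf r.down n] = [j]
          congr 1
          show r.down (2 * n) = j
          exact h1.2
      rw [h3] at h2
      exact Set.mem_iUnion.mpr ⟨j, Set.mem_iUnion.mpr ⟨hj, h2⟩⟩
    · exact wstd_le (show m ≤ 2 * n by omega) h1.1
  · -- continuity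
    exact continuous_def.mpr fun U hU =>
      TopologicalSpace.GenerateOpen.basic _ (Or.inl ⟨U, hU, rfl⟩)
  · -- open map
    intro U hU
    rw [isOpen_iff_forall_mem_open]
    rintro x ⟨y, hyU, rfl⟩
    have hGO : TopologicalSpace.GenerateOpen SB U := hU
    obtain ⟨U', m, hU'o, hgyU', hsub⟩ := gen_open_struct hGO y hyU
    refine ⟨U' ∩ V (eL (pre y.down m)), ?_, tX.isOpen_inter _ _ hU'o (hA.1 _), hgyU', ?_⟩
    · rintro z ⟨hzU', hzV⟩
      obtain ⟨p, hp, hfp⟩ := sel0_onto tX V hι hA hzV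
      refine ⟨⟨p⟩, hsub ⟨?_, hp⟩, hfp⟩
      show g ⟨p⟩ ∈ U'
      rw [show g ⟨p⟩ = z from hfp]
      exact hzU'
    · -- g y ∈ V (eL (pre y.down m))
      rw [eL_pre']
      exact fruit_subset_layer V (epf y.down) ((m + 1) / 2) (sel0_spec tX V ι hA y.down).1
  · -- surjective
    intro x
    have hx : x ∈ V (eL []) := by
      rw [eL_nil, hA.2.2.1.1]
      trivial
    obtain ⟨p, -, hfp⟩ := sel0_onto tX V hι hA hx
    exact ⟨⟨p⟩, hfp⟩

end LusinHelper

/-- A space `X` is a continuous open image of a space possessing a Lusin π-base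
iff `X` has an α-scheme and `|X| ≤ 𝔠`. -/
theorem statement0 {X : Type u} [tX : TopologicalSpace X] :
    (∃ (Y : Type u) (tY : TopologicalSpace Y) (f : Y → X),
        (∃ W : List ℕ → Set Y, LusinPiBase tY W) ∧
        @Continuous Y X tY tX f ∧ @IsOpenMap Y X tY tX f ∧ Function.Surjective f) ↔
      ((∃ V : List ℕ → Set X, AlphaScheme tX V) ∧ Cardinal.mk X ≤ Cardinal.continuum) := by
  constructor
  · rintro ⟨Y, tY, f, ⟨W, hL⟩, hc, ho, hs⟩
    exact ⟨⟨fun a => f '' W a, LusinHelper.forward_alpha hL hc ho hs⟩,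
      LusinHelper.forward_card hL hs⟩
  · rintro ⟨⟨V, hA⟩, hcard⟩
    exact LusinHelper.backward hA hcard
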